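/- With k = (4,0,0,0): (a) the vector (8,4,4,4) = 4·(2,1,1,1) satisfies M·(8,4,4,4) = −k, so the canonical cycle of Γ(2,3,3,4) is Z_{K_X} = 4·Z_X; (b) the fundamental genus is p_a(Z_X) = p_a((2,1,1,1)) = 4; (c) the maximum of p_a(z) over all nonzero cycles z ∈ ℤ⁴, z ≥ 0, equals 5, and it is attained at z = 2·Z_X = (4,2,2,2) (so the arithmetic genus of any singularity with resolution graph Γ(2,3,3,4) is 5). -/

import Mathlib

open Matrix

/-- With `k = (4,0,0,0)`:
(a) `M·(8,4,4,4) = −k` and `(8,4,4,4) = 4·(2,1,1,1)`, so the canonical cycle of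
`Γ(2,3,3,4)` is `Z_{K_X} = 4·Z_X`;
(b) the fundamental genus is `p_a(Z_X) = p_a((2,1,1,1)) = 4`;
(c) the maximum of `p_a(z)` over nonzero cycles `z ≥ 0` equals `5`, attained at
`z = 2·Z_X = (4,2,2,2)`. -/
theorem arithmetic_genus_2334
    (M : Matrix (Fin 4) (Fin 4) ℤ)
    (hM : M = !![-2, 1, 1, 1; 1, -2, 0, 0; 1, 0, -2, 0; 1, 0, 0, -2])
    (k : Fin 4 → ℤ) (hk : k = ![4, 0, 0, 0])
    (pa : (Fin 4 → ℤ) → ℤ)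
    (hpa : ∀ z : Fin 4 → ℤ, pa z = 1 + (z ⬝ᵥ M.mulVec z + k ⬝ᵥ z) / 2) :
    (M.mulVec ![8, 4, 4, 4] = -k ∧
      (![8, 4, 4, 4] : Fin 4 → ℤ) = (4 : ℤ) • ![2, 1, 1, 1]) ∧
    pa ![2, 1, 1, 1] = 4 ∧
    (pa ![4, 2, 2, 2] = 5 ∧
      (![4, 2, 2, 2] : Fin 4 → ℤ) = (2 : ℤ) • ![2, 1, 1, 1] ∧
      ∀ z : Fin 4 → ℤ, (∀ i, 0 ≤ z i) → z ≠ 0 → pa z ≤ 5) := by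
  subst hM hk
  have key : ∀ z : Fin 4 → ℤ,
      z ⬝ᵥ (!![-2, 1, 1, 1; 1, -2, 0, 0; 1, 0, -2, 0; 1, 0, 0, -2] : Matrix (Fin 4) (Fin 4) ℤ).mulVec z
        + (![4, 0, 0, 0] : Fin 4 → ℤ) ⬝ᵥ z
      = 2 * (-(z 0)^2 - (z 1)^2 - (z 2)^2 - (z 3)^2
          + z 0 * z 1 + z 0 * z 2 + z 0 * z 3 + 2 * z 0) := by
    intro z
    simp [dotProduct, Matrix.mulVec, Fin.sum_univ_four, Matrix.vecHead, Matrix.vecTail]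
    ring
  refine ⟨⟨?_, ?_⟩, ?_, ?_, ?_, ?_⟩
  · funext i
    fin_cases i <;> simp [Matrix.mulVec, dotProduct, Fin.sum_univ_four]
  · funext i; fin_cases i <;> simp
  · rw [hpa, key]; norm_num; rfl
  · rw [hpa, key]; norm_num; rfl
  · funext i; fin_cases i <;> simp
  · intro z hz _
    rw [hpa, key, Int.mul_ediv_cancel_left _ (by norm_num)]
    nlinarith [hz 0, hz 1, hz 2, hz 3, sq_nonneg (2 * z 1 - z 0),
      sq_nonneg (2 * z 2 - z 0), sq_nonneg (2 * z 3 - z 0), sq_nonneg (z 0 - 4)]
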